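/- Generator comparison bound (key estimate in the proof of Theorem 1, including the unbounded-jump case): Let d ≥ 1, β ∈ (0,1], let P be a stochastic matrix on ℤ^d, and let x ∈ ℤ^d be such that Σ_y P(x,y)‖y−x‖² < ∞; let μ(x) and σ²(x) be the drift and diffusion matrix of P at x. Let f : ℝ^d → ℝ be twice continuously differentiable with Σ_y P(x,y)|f(y)| < ∞ and S := Σ_y P(x,y) ‖y−x‖^{2+β} [D²f]_{β, B̄(x,‖y−x‖)} < ∞. Then | Σ_y P(x,y)(f(y) − f(x)) − μ(x)·Df(x) − (1/2)·trace(σ²(x)·D²f(x)) | ≤ S/2. In particular, if P has jumps bounded by a real number 𝔧 ≥ 1, then the left-hand side is at most 𝔧^{2+β} [D²f]_{β, B̄(x,𝔧)}. -/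

import Mathlib

open scoped ENNReal BigOperators

noncomputable section

/-- `ℤ^d` represented as functions `Fin d → ℤ`. -/
abbrev Zd (d : ℕ) := Fin d → ℤ

/-- The embedding of `ℤ^d` into Euclidean `ℝ^d`. -/
def zToR {d : ℕ} (x : Zd d) : EuclideanSpace ℝ (Fin d) := WithLp.toLp 2 (fun i => (x i : ℝ))

/-- Entry `(i, j)` of the Hessian of `f` at `x`. -/
def hessianEntry {d : ℕ} (f : EuclideanSpace ℝ (Fin d) → ℝ)
    (x : EuclideanSpace ℝ (Fin d)) (i j : Fin d) : ℝ :=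
  iteratedFDeriv ℝ 2 f x ![EuclideanSpace.single i 1, EuclideanSpace.single j 1]

/-- The Hölder seminorm `[D²f]_{β,Ω}` of the Hessian of `f` over `Ω`, in `[0,∞]`. -/
def hessHolder {d : ℕ} (β : ℝ) (f : EuclideanSpace ℝ (Fin d) → ℝ)
    (Ω : Set (EuclideanSpace ℝ (Fin d))) : ℝ≥0∞ :=
  ⨆ (y : Ω) (z : Ω) (_ : (y : EuclideanSpace ℝ (Fin d)) ≠ (z : EuclideanSpace ℝ (Fin d))),
    ENNReal.ofReal
      (‖iteratedFDeriv ℝ 2 f (y : EuclideanSpace ℝ (Fin d)) -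
          iteratedFDeriv ℝ 2 f (z : EuclideanSpace ℝ (Fin d))‖ /
        ‖(y : EuclideanSpace ℝ (Fin d)) - (z : EuclideanSpace ℝ (Fin d))‖ ^ β)

open Metric Set

section aux

variable {E : Type*} [NormedAddCommGroup E] [NormedSpace ℝ E]

theorem taylor2_bound (f : E → ℝ) (hf : ContDiff ℝ 2 f) (x h : E) (β C : ℝ)
    (hβ0 : 0 < β) (hβ1 : β ≤ 1) (hC : 0 ≤ C)
    (hHol : ∀ a ∈ closedBall x ‖h‖,
      ‖iteratedFDeriv ℝ 2 f a - iteratedFDeriv ℝ 2 f x‖ ≤ C * ‖a - x‖ ^ β) :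
    |f (x + h) - f x - fderiv ℝ f x h - (1/2) * iteratedFDeriv ℝ 2 f x ![h, h]| ≤
      1/2 * (C * ‖h‖ ^ (2+β)) := by
  rcases eq_or_ne h 0 with rfl | hh
  · simp [iteratedFDeriv_two_apply]
    positivity
  have hfd : Differentiable ℝ f := hf.differentiable (by norm_num)
  have hfd2 : Differentiable ℝ (fderiv ℝ f) :=
    (hf.fderiv_right (m := 1) (by norm_num)).differentiable (by norm_num)
  set g1 : ℝ → ℝ := fun t => fderiv ℝ f (x + t • h) h with hg1
  set g2 : ℝ → ℝ := fun t => fderiv ℝ (fderiv ℝ f) (x + t • h) h h with hg2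
  have hL : ∀ t : ℝ, HasDerivAt (fun s : ℝ => x + s • h) h t := fun t =>
    by simpa using ((hasDerivAt_id t).smul_const h).const_add x
  have hg1' : ∀ t : ℝ, HasDerivAt (fun s => f (x + s • h)) (g1 t) t := fun t =>
    (hfd (x + t • h)).hasFDerivAt.comp_hasDerivAt t (hL t)
  have hg2' : ∀ t : ℝ, HasDerivAt g1 (g2 t) t := by
    intro t
    have h1 : HasFDerivAt (fun u => fderiv ℝ f u h)
        ((ContinuousLinearMap.apply ℝ ℝ h).comp (fderiv ℝ (fderiv ℝ f) (x + t • h)))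
        (x + t • h) :=
      (ContinuousLinearMap.apply ℝ ℝ h).hasFDerivAt.comp _ (hfd2 _).hasFDerivAt
    exact h1.comp_hasDerivAt t (hL t)
  set K : ℝ := C * ‖h‖ ^ (2+β) with hK
  have hhpos : (0:ℝ) < ‖h‖ := norm_pos_iff.mpr hh
  have hKnn : 0 ≤ K := by positivity
  -- bound on g2 t - g2 0 for t ∈ [0,1]
  have hg2bd : ∀ t ∈ Icc (0:ℝ) 1, |g2 t - g2 0| ≤ K := by
    intro t ht
    have hmem : x + t • h ∈ closedBall x ‖h‖ := by
      simp only [mem_closedBall, dist_self_add_left, norm_smul, Real.norm_eq_abs,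
        abs_of_nonneg ht.1]
      nlinarith [ht.2, hhpos]
    have key : g2 t - g2 0 =
        (iteratedFDeriv ℝ 2 f (x + t • h) - iteratedFDeriv ℝ 2 f x) ![h, h] := by
      simp [hg2, ContinuousMultilinearMap.sub_apply, iteratedFDeriv_two_apply]
    rw [key]
    calc |(iteratedFDeriv ℝ 2 f (x + t • h) - iteratedFDeriv ℝ 2 f x) ![h, h]|
        ≤ ‖iteratedFDeriv ℝ 2 f (x + t • h) - iteratedFDeriv ℝ 2 f x‖ * ∏ i, ‖(![h, h]) i‖ :=
          (iteratedFDeriv ℝ 2 f (x + t • h) - iteratedFDeriv ℝ 2 f x).le_opNorm _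
      _ ≤ (C * ‖x + t • h - x‖ ^ β) * (‖h‖ * ‖h‖) := by
          gcongr
          · exact hHol _ hmem
          · simp [Fin.prod_univ_two]
      _ ≤ (C * ‖h‖ ^ β) * (‖h‖ * ‖h‖) := by
          gcongr
          have : ‖x + t • h - x‖ = t * ‖h‖ := by
            simp [norm_smul, Real.norm_eq_abs, abs_of_nonneg ht.1]
          rw [this]; nlinarith [ht.2, hhpos]
      _ = K := by
          rw [hK, Real.rpow_add hhpos]
          rw [show ((2:ℝ)) = ((2:ℕ):ℝ) by norm_num, Real.rpow_natCast]
          ring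
  set φ : ℝ → ℝ := fun t => f (x + t • h) - f x - t * g1 0 - t^2/2 * g2 0 with hφ
  set φ1 : ℝ → ℝ := fun t => g1 t - g1 0 - t * g2 0 with hφ1
  have hφ' : ∀ t : ℝ, HasDerivAt φ (φ1 t) t := by
    intro t
    have h1 : HasDerivAt (fun s : ℝ => s * g1 0) (g1 0) t := by
      simpa using (hasDerivAt_id t).mul_const (g1 0)
    have h2 : HasDerivAt (fun s : ℝ => s^2/2 * g2 0) (t * g2 0) t := by
      have := ((hasDerivAt_pow 2 t).div_const 2).mul_const (g2 0)
      simpa using this.congr_deriv (by push_cast; ring)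
    exact (((hg1' t).sub_const (f x)).sub h1).sub h2
  have hφ1' : ∀ t : ℝ, HasDerivAt φ1 (g2 t - g2 0) t := by
    intro t
    have h1 : HasDerivAt (fun s : ℝ => s * g2 0) (g2 0) t := by
      simpa using (hasDerivAt_id t).mul_const (g2 0)
    exact (((hg2' t).sub_const (g1 0)).sub h1)
  have hφ1bd : ∀ t ∈ Icc (0:ℝ) 1, |φ1 t| ≤ K * t := by
    intro t ht
    have := Convex.norm_image_sub_le_of_norm_hasDerivWithin_le
      (f := φ1) (f' := fun s => g2 s - g2 0) (s := Icc (0:ℝ) 1)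
      (fun s hs => (hφ1' s).hasDerivWithinAt) (fun s hs => by
        simpa [Real.norm_eq_abs] using hg2bd s hs) (convex_Icc 0 1)
      (left_mem_Icc.mpr zero_le_one) ht
    have hφ10 : φ1 0 = 0 := by simp [hφ1]
    simpa [hφ10, Real.norm_eq_abs, abs_of_nonneg ht.1] using this
  have main : ∀ s : ℝ, |s| = 1 → s * φ 1 ≤ K / 2 := by
    intro s hs
    set η : ℝ → ℝ := fun t => K * t^2/2 - s * φ t with hη
    have hη' : ∀ t : ℝ, HasDerivAt η (K * t - s * φ1 t) t := by
      intro t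
      have h1 : HasDerivAt (fun u : ℝ => K * u^2/2) (K * t) t := by
        have := ((hasDerivAt_pow 2 t).const_mul K).div_const 2
        simpa using this.congr_deriv (by push_cast; ring)
      exact h1.sub ((hφ' t).const_mul s)
    have hmono : MonotoneOn η (Icc (0:ℝ) 1) := by
      apply monotoneOn_of_deriv_nonneg (convex_Icc 0 1)
      · exact fun t _ => ((hη' t).continuousAt).continuousWithinAt
      · exact fun t _ => ((hη' t).differentiableAt).differentiableWithinAt
      · intro t htint
        rw [interior_Icc] at htint
        rw [(hη' t).deriv]
        have h1 : s * φ1 t ≤ |φ1 t| := by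
          calc s * φ1 t ≤ |s * φ1 t| := le_abs_self _
            _ = |φ1 t| := by rw [abs_mul, hs, one_mul]
        have h2 := hφ1bd t (Ioo_subset_Icc_self htint)
        linarith
    have h01 := hmono (left_mem_Icc.mpr zero_le_one) (right_mem_Icc.mpr zero_le_one)
      zero_le_one
    have hφ0 : φ 0 = 0 := by simp [hφ]
    simp only [hη, hφ0, mul_zero, zero_pow, ne_eq, OfNat.ofNat_ne_zero,
      not_false_eq_true] at h01
    nlinarith [h01]
  have habs : |φ 1| ≤ K / 2 := by
    rw [abs_le]
    constructor
    · have := main (-1) (by simp)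
      linarith
    · have := main 1 (by simp)
      linarith
  have hφ1eq : φ 1 = f (x + h) - f x - fderiv ℝ f x h -
      (1/2) * iteratedFDeriv ℝ 2 f x ![h, h] := by
    simp [hφ, hg1, hg2, iteratedFDeriv_two_apply]
  rw [← hφ1eq]
  linarith [habs]

end aux

lemma hessHolder_mono {d : ℕ} (β : ℝ) (f : EuclideanSpace ℝ (Fin d) → ℝ)
    {Ω₁ Ω₂ : Set (EuclideanSpace ℝ (Fin d))} (h : Ω₁ ⊆ Ω₂) :
    hessHolder β f Ω₁ ≤ hessHolder β f Ω₂ := by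
  refine iSup_le fun y => iSup_le fun z => iSup_le fun hne => ?_
  exact le_iSup_of_le ⟨y, h y.2⟩ (le_iSup_of_le ⟨z, h z.2⟩ (le_iSup_of_le hne le_rfl))

lemma hessHolder_spec {d : ℕ} {β : ℝ} (hβ0 : 0 < β) {f : EuclideanSpace ℝ (Fin d) → ℝ}
    {Ω : Set (EuclideanSpace ℝ (Fin d))} (hfin : hessHolder β f Ω ≠ ⊤)
    {a b : EuclideanSpace ℝ (Fin d)} (ha : a ∈ Ω) (hb : b ∈ Ω) :
    ‖iteratedFDeriv ℝ 2 f a - iteratedFDeriv ℝ 2 f b‖ ≤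
      (hessHolder β f Ω).toReal * ‖a - b‖ ^ β := by
  rcases eq_or_ne a b with rfl | hne
  · simp [Real.zero_rpow hβ0.ne']
  · have hle : ENNReal.ofReal (‖iteratedFDeriv ℝ 2 f a - iteratedFDeriv ℝ 2 f b‖ /
        ‖a - b‖ ^ β) ≤ hessHolder β f Ω :=
      le_iSup_of_le ⟨a, ha⟩ (le_iSup_of_le ⟨b, hb⟩ (le_iSup_of_le hne le_rfl))
    have hβpos : (0:ℝ) < ‖a - b‖ ^ β :=
      Real.rpow_pos_of_pos (norm_pos_iff.mpr (sub_ne_zero.mpr hne)) β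
    have := (ENNReal.ofReal_le_iff_le_toReal hfin).mp hle
    calc ‖iteratedFDeriv ℝ 2 f a - iteratedFDeriv ℝ 2 f b‖
        = ‖iteratedFDeriv ℝ 2 f a - iteratedFDeriv ℝ 2 f b‖ / ‖a - b‖ ^ β * ‖a - b‖ ^ β := by
          field_simp
      _ ≤ (hessHolder β f Ω).toReal * ‖a - b‖ ^ β := by gcongr

lemma euclid_decomp {d : ℕ} (v : EuclideanSpace ℝ (Fin d)) :
    v = ∑ i, v i • EuclideanSpace.single i (1:ℝ) := by
  ext j
  rw [show ((∑ i, v i • EuclideanSpace.single i (1:ℝ)) : EuclideanSpace ℝ (Fin d)) j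
    = ∑ i, (v i • EuclideanSpace.single i (1:ℝ)) j by
      rw [WithLp.ofLp_sum]; exact Finset.sum_apply j _ _]
  simp [EuclideanSpace.single_apply]

lemma clm_expand {d : ℕ} (L : EuclideanSpace ℝ (Fin d) →L[ℝ] ℝ) (v : EuclideanSpace ℝ (Fin d)) :
    L v = ∑ i, v i * L (EuclideanSpace.single i (1:ℝ)) := by
  conv_lhs => rw [euclid_decomp v]
  rw [map_sum]
  simp

lemma clm2_expand {d : ℕ}
    (A : EuclideanSpace ℝ (Fin d) →L[ℝ] (EuclideanSpace ℝ (Fin d) →L[ℝ] ℝ))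
    (v : EuclideanSpace ℝ (Fin d)) :
    A v v = ∑ i, ∑ j, (v i * v j) *
      A (EuclideanSpace.single i (1:ℝ)) (EuclideanSpace.single j (1:ℝ)) := by
  have h1 : A v = ∑ i, v i • A (EuclideanSpace.single i (1:ℝ)) := by
    conv_lhs => rw [euclid_decomp v]
    rw [map_sum]
    simp
  rw [h1, ContinuousLinearMap.sum_apply]
  congr 1
  ext i
  rw [ContinuousLinearMap.smul_apply]
  have h2 : A (EuclideanSpace.single i (1:ℝ)) v =
      ∑ j, v j * A (EuclideanSpace.single i (1:ℝ)) (EuclideanSpace.single j (1:ℝ)) :=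
    clm_expand _ v
  rw [h2, smul_eq_mul, Finset.mul_sum]
  congr 1; ext j; ring

theorem generator_comparison_bound
    (d : ℕ) (hd : 1 ≤ d) (β : ℝ) (hβ0 : 0 < β) (hβ1 : β ≤ 1)
    (P : Zd d → Zd d → ℝ)
    (hP0 : ∀ x y, 0 ≤ P x y) (hPsum : ∀ x, HasSum (P x) 1)
    (x : Zd d)
    (hmom2 : Summable (fun y : Zd d => P x y * ‖zToR y - zToR x‖ ^ 2))
    (μx : EuclideanSpace ℝ (Fin d)) (σ2x : Matrix (Fin d) (Fin d) ℝ)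
    (hμ : ∀ i, HasSum (fun y => P x y * (zToR y - zToR x) i) (μx i))
    (hσ2 : ∀ i j,
      HasSum (fun y => P x y * ((zToR y - zToR x) i * (zToR y - zToR x) j)) (σ2x i j))
    (f : EuclideanSpace ℝ (Fin d) → ℝ) (hf : ContDiff ℝ 2 f)
    (hfint : Summable (fun y : Zd d => P x y * |f (zToR y)|))
    (S : ℝ≥0∞)
    (hS : S = ∑' y : Zd d, ENNReal.ofReal (P x y) *
        (ENNReal.ofReal (‖zToR y - zToR x‖ ^ (2 + β)) *
          hessHolder β f (Metric.closedBall (zToR x) ‖zToR y - zToR x‖)))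
    (hSfin : S ≠ ⊤)
    (jmp : ℝ) (hjmp : 1 ≤ jmp) :
    ENNReal.ofReal |(∑' y : Zd d, P x y * (f (zToR y) - f (zToR x))) -
        fderiv ℝ f (zToR x) μx -
        (1 / 2) * ∑ i, ∑ j, σ2x i j * hessianEntry f (zToR x) i j| ≤ S / 2 ∧
      ((∀ y, jmp < ‖zToR y - zToR x‖ → P x y = 0) →
        ENNReal.ofReal |(∑' y : Zd d, P x y * (f (zToR y) - f (zToR x))) -
            fderiv ℝ f (zToR x) μx -
            (1 / 2) * ∑ i, ∑ j, σ2x i j * hessianEntry f (zToR x) i j| ≤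
          ENNReal.ofReal (jmp ^ (2 + β)) *
            hessHolder β f (Metric.closedBall (zToR x) jmp)) := by
  set e : Fin d → EuclideanSpace ℝ (Fin d) := fun i => EuclideanSpace.single i (1:ℝ) with he
  set L : EuclideanSpace ℝ (Fin d) →L[ℝ] ℝ := fderiv ℝ f (zToR x) with hL
  set A : EuclideanSpace ℝ (Fin d) →L[ℝ] (EuclideanSpace ℝ (Fin d) →L[ℝ] ℝ) :=
    fderiv ℝ (fderiv ℝ f) (zToR x) with hA
  set R : Zd d → ℝ := fun y => f (zToR y) - f (zToR x) - L (zToR y - zToR x) -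
    (1/2) * (A (zToR y - zToR x) (zToR y - zToR x)) with hR
  have hEntry : ∀ i j, hessianEntry f (zToR x) i j = A (e i) (e j) := by
    intro i j
    rw [hessianEntry, iteratedFDeriv_two_apply]
    rfl
  have hPs : Summable (P x) := (hPsum x).summable
  -- summability of the main term
  have hsum0 : Summable (fun y => P x y * (f (zToR y) - f (zToR x))) := by
    have s1 : Summable (fun y => P x y * f (zToR y)) := by
      rw [← summable_abs_iff]
      refine hfint.congr fun y => ?_
      rw [abs_mul, abs_of_nonneg (hP0 x y)]
    have s2 : Summable (fun y => P x y * f (zToR x)) := hPs.mul_right _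
    refine (s1.sub s2).congr fun y => ?_
    rw [mul_sub]
  -- the drift term
  have hLsum : HasSum (fun y => P x y * L (zToR y - zToR x)) (L μx) := by
    have h2 : HasSum (fun y => ∑ i, (P x y * (zToR y - zToR x) i) * L (e i))
        (∑ i, μx i * L (e i)) :=
      hasSum_sum fun i _ => (hμ i).mul_right _
    have h3 : (fun y => ∑ i, (P x y * (zToR y - zToR x) i) * L (e i)) =
        fun y => P x y * L (zToR y - zToR x) := by
      funext y
      rw [clm_expand L (zToR y - zToR x), Finset.mul_sum]
      exact Finset.sum_congr rfl fun i _ => by ring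
    rw [h3] at h2
    rwa [show L μx = ∑ i, μx i * L (e i) from clm_expand L μx]
  -- the diffusion term
  have hQsum : HasSum (fun y => P x y * A (zToR y - zToR x) (zToR y - zToR x))
      (∑ i, ∑ j, σ2x i j * A (e i) (e j)) := by
    have h2 : HasSum
        (fun y => ∑ i, ∑ j, (P x y * ((zToR y - zToR x) i * (zToR y - zToR x) j)) * A (e i) (e j))
        (∑ i, ∑ j, σ2x i j * A (e i) (e j)) :=
      hasSum_sum fun i _ => hasSum_sum fun j _ => (hσ2 i j).mul_right _
    refine h2.congr_fun fun y => ?_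
    rw [clm2_expand A (zToR y - zToR x), Finset.mul_sum]
    refine Finset.sum_congr rfl fun i _ => ?_
    rw [Finset.mul_sum]
    exact Finset.sum_congr rfl fun j _ => by ring
  have hcomb : HasSum (fun y => P x y * R y)
      ((∑' y : Zd d, P x y * (f (zToR y) - f (zToR x))) - L μx -
        (1/2) * ∑ i, ∑ j, σ2x i j * A (e i) (e j)) := by
    have h := (hsum0.hasSum.sub hLsum).sub (hQsum.mul_left (1/2))
    refine h.congr_fun fun y => ?_
    simp only [hR]
    ring
  -- master bound
  have hbound : ENNReal.ofReal |(∑' y : Zd d, P x y * (f (zToR y) - f (zToR x))) -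
      fderiv ℝ f (zToR x) μx -
      (1 / 2) * ∑ i, ∑ j, σ2x i j * hessianEntry f (zToR x) i j| ≤ S / 2 := by
    have hgoal_eq : (∑' y : Zd d, P x y * (f (zToR y) - f (zToR x))) -
        fderiv ℝ f (zToR x) μx -
        (1 / 2) * ∑ i, ∑ j, σ2x i j * hessianEntry f (zToR x) i j =
        ∑' y, P x y * R y := by
      simp only [hEntry]
      rw [← hL, ← hcomb.tsum_eq]
    rw [hgoal_eq]
    -- pointwise bound
    have hpt : ∀ y : Zd d, ENNReal.ofReal |P x y * R y| ≤
        (ENNReal.ofReal (P x y) * (ENNReal.ofReal (‖zToR y - zToR x‖ ^ (2 + β)) *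
          hessHolder β f (Metric.closedBall (zToR x) ‖zToR y - zToR x‖))) / 2 := by
      intro y
      set h : EuclideanSpace ℝ (Fin d) := zToR y - zToR x with hh
      have hy : zToR y = zToR x + h := by rw [hh]; abel
      rcases eq_or_ne h 0 with h0 | h0
      · have : R y = 0 := by
          simp only [hR, hy, h0, add_zero, sub_self, map_zero,
            ContinuousLinearMap.zero_apply]
          ring
        simp [this]
      · set H := hessHolder β f (Metric.closedBall (zToR x) ‖h‖) with hHdef
        have hhpos : (0:ℝ) < ‖h‖ := norm_pos_iff.mpr h0
        rcases eq_or_ne H ⊤ with htop | hfin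
        · rcases eq_or_ne (P x y) 0 with hp0 | hp0
          · simp [hp0]
          · have h1 : ENNReal.ofReal (‖h‖ ^ (2 + β)) ≠ 0 := by
              simp only [ne_eq, ENNReal.ofReal_eq_zero, not_le]
              exact Real.rpow_pos_of_pos hhpos _
            have h2 : ENNReal.ofReal (P x y) ≠ 0 := by
              simp only [ne_eq, ENNReal.ofReal_eq_zero, not_le]
              exact lt_of_le_of_ne (hP0 x y) (Ne.symm hp0)
            rw [htop, ENNReal.mul_top h1, ENNReal.mul_top h2,
              ENNReal.top_div_of_ne_top (by norm_num)]
            exact le_top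
        · set C := H.toReal with hCdef
          have hCnn : 0 ≤ C := ENNReal.toReal_nonneg
          have hHol : ∀ a ∈ Metric.closedBall (zToR x) ‖h‖,
              ‖iteratedFDeriv ℝ 2 f a - iteratedFDeriv ℝ 2 f (zToR x)‖ ≤
                C * ‖a - zToR x‖ ^ β := fun a ha =>
            hessHolder_spec hβ0 hfin ha (mem_closedBall_self (norm_nonneg _))
          have htay := taylor2_bound f hf (zToR x) h β C hβ0 hβ1 hCnn hHol
          have hReq : R y = f (zToR x + h) - f (zToR x) - fderiv ℝ f (zToR x) h -
              (1/2) * iteratedFDeriv ℝ 2 f (zToR x) ![h, h] := by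
            simp only [hR, hy, iteratedFDeriv_two_apply, add_sub_cancel_left,
              Matrix.cons_val_zero, Matrix.cons_val_one, Matrix.head_cons]
            rfl
          have hRle : |R y| ≤ 1/2 * (C * ‖h‖ ^ (2 + β)) := by rw [hReq]; exact htay
          have hreal : P x y * |R y| ≤ (P x y * (‖h‖ ^ (2 + β) * C)) / 2 := by
            have := mul_le_mul_of_nonneg_left hRle (hP0 x y)
            linarith [this]
          calc ENNReal.ofReal |P x y * R y|
              = ENNReal.ofReal (P x y * |R y|) := by
                rw [abs_mul, abs_of_nonneg (hP0 x y)]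
            _ ≤ ENNReal.ofReal ((P x y * (‖h‖ ^ (2 + β) * C)) / 2) :=
                ENNReal.ofReal_le_ofReal hreal
            _ = ENNReal.ofReal (P x y * (‖h‖ ^ (2 + β) * C)) / 2 := by
                rw [ENNReal.ofReal_div_of_pos (by norm_num)]
                norm_num
            _ = (ENNReal.ofReal (P x y) * (ENNReal.ofReal (‖h‖ ^ (2 + β)) * H)) / 2 := by
                rw [ENNReal.ofReal_mul (hP0 x y),
                  ENNReal.ofReal_mul (Real.rpow_nonneg (norm_nonneg _) _),
                  ENNReal.ofReal_toReal hfin]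
    calc ENNReal.ofReal |∑' y, P x y * R y|
        ≤ ENNReal.ofReal (∑' y, |P x y * R y|) := by
          apply ENNReal.ofReal_le_ofReal
          have hsabs : Summable (fun y => ‖P x y * R y‖) :=
            ((summable_abs_iff.mpr hcomb.summable).congr (fun y => rfl)).congr
              (fun y => (Real.norm_eq_abs _).symm)
          simpa only [Real.norm_eq_abs] using
            norm_tsum_le_tsum_norm (f := fun y => P x y * R y) hsabs
      _ = ∑' y, ENNReal.ofReal |P x y * R y| :=
          ENNReal.ofReal_tsum_of_nonneg (fun _ => abs_nonneg _)
            ((summable_abs_iff.mpr hcomb.summable).congr (fun y => rfl))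
      _ ≤ ∑' y : Zd d, (ENNReal.ofReal (P x y) *
            (ENNReal.ofReal (‖zToR y - zToR x‖ ^ (2 + β)) *
              hessHolder β f (Metric.closedBall (zToR x) ‖zToR y - zToR x‖))) / 2 :=
          ENNReal.tsum_le_tsum hpt
      _ = S / 2 := by
          rw [hS]
          simp_rw [div_eq_mul_inv]
          rw [ENNReal.tsum_mul_right]
  refine ⟨hbound, fun hjump => ?_⟩
  have htsumP : (∑' y : Zd d, ENNReal.ofReal (P x y)) = 1 := by
    rw [← ENNReal.ofReal_tsum_of_nonneg (hP0 x) hPs, (hPsum x).tsum_eq, ENNReal.ofReal_one]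
  have hSle : S ≤ ENNReal.ofReal (jmp ^ (2 + β)) *
      hessHolder β f (Metric.closedBall (zToR x) jmp) := by
    rw [hS]
    calc (∑' y : Zd d, ENNReal.ofReal (P x y) *
          (ENNReal.ofReal (‖zToR y - zToR x‖ ^ (2 + β)) *
           hessHolder β f (Metric.closedBall (zToR x) ‖zToR y - zToR x‖)))
        ≤ ∑' y : Zd d, ENNReal.ofReal (P x y) *
          (ENNReal.ofReal (jmp ^ (2 + β)) *
           hessHolder β f (Metric.closedBall (zToR x) jmp)) := by
          refine ENNReal.tsum_le_tsum fun y => ?_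
          rcases eq_or_ne (P x y) 0 with h0 | h0
          · simp [h0]
          · have hle : ‖zToR y - zToR x‖ ≤ jmp := by
              by_contra hlt
              exact h0 (hjump y (lt_of_not_ge hlt))
            refine mul_le_mul' le_rfl (mul_le_mul' ?_ ?_)
            · exact ENNReal.ofReal_le_ofReal
                (Real.rpow_le_rpow (norm_nonneg _) hle (by linarith))
            · exact hessHolder_mono β f (closedBall_subset_closedBall hle)
      _ = ENNReal.ofReal (jmp ^ (2 + β)) *
           hessHolder β f (Metric.closedBall (zToR x) jmp) := by
          rw [ENNReal.tsum_mul_right, htsumP, one_mul]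
  exact hbound.trans (le_trans ENNReal.half_le_self hSle)
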